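/- Let n be a positive integer divisible by 4 and let L = n·I − J − (e₁ − e₂)(e₁ − e₂)ᵀ be the Laplacian of the complete graph on n vertices with the edge between vertices 1 and 2 deleted. Then |(exp(i (π/2) L))₁₂| = 1; that is, there is perfect state transfer from vertex 1 to vertex 2 at time π/2. -/

import Mathlib

open Matrix

/-- The vector `e₁ - e₂`. -/
def eVec (n : ℕ) : Fin n → ℝ :=
  fun i => (if (i : ℕ) = 0 then 1 else 0) - (if (i : ℕ) = 1 then 1 else 0)

/-- The Laplacian `L = n I - J - (e₁ - e₂)(e₁ - e₂)ᵀ` of the complete graph on `n`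
vertices with the edge between vertices 1 and 2 deleted. -/
def lap (n : ℕ) : Matrix (Fin n) (Fin n) ℝ :=
  (n : ℝ) • (1 : Matrix (Fin n) (Fin n) ℝ) - Matrix.of (fun _ _ => (1 : ℝ))
    - Matrix.vecMulVec (eVec n) (eVec n)

open scoped Nat in
theorem exp_idem {𝔸 : Type*} [NormedRing 𝔸] [NormedAlgebra ℂ 𝔸] [CompleteSpace 𝔸]
    (P : 𝔸) (h : P * P = P) (c : ℂ) :
    NormedSpace.exp (c • P) = 1 + (Complex.exp c - 1) • P := by
  have hpow : ∀ k : ℕ, P ^ (k + 1) = P := by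
    intro k
    induction k with
    | zero => simp
    | succ k ih => rw [pow_succ, ih, h]
  have hsum : Summable fun k : ℕ => ((k !)⁻¹ : ℂ) • (c • P) ^ k :=
    NormedSpace.expSeries_summable' (𝕂 := ℂ) (c • P)
  have hsumc : Summable fun k : ℕ => ((k !)⁻¹ : ℂ) * c ^ k := by
    simpa [smul_eq_mul] using NormedSpace.expSeries_summable' (𝕂 := ℂ) c
  rw [NormedSpace.exp_eq_tsum ℂ]; simp only []
  rw [Summable.tsum_eq_zero_add hsum]
  have h1 : ∀ k : ℕ, ((k + 1)!⁻¹ : ℂ) • (c • P) ^ (k + 1)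
      = (((k + 1)!⁻¹ : ℂ) * c ^ (k + 1)) • P := by
    intro k
    rw [smul_pow, hpow, smul_smul]
  simp only [h1]
  rw [Summable.tsum_smul_const (by exact hsumc.comp_injective Nat.succ_injective : Summable fun k : ℕ => ((k + 1)!⁻¹ : ℂ) * c ^ (k + 1))]
  have hec : Complex.exp c = 1 + ∑' k : ℕ, ((k + 1)!⁻¹ : ℂ) * c ^ (k + 1) := by
    rw [Complex.exp_eq_exp_ℂ, NormedSpace.exp_eq_tsum ℂ]
    simp only [smul_eq_mul]
    rw [Summable.tsum_eq_zero_add hsumc]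
    simp
  rw [hec]
  simp [Function.comp]

/-- If `4 ∣ n` then the Laplacian of the complete graph on `n` vertices minus the edge
`{1,2}` admits perfect state transfer from vertex 1 to vertex 2 at time `π/2`. -/
theorem stmt13 {n : ℕ} (hn : 0 < n) (hdvd : 4 ∣ n) :
    norm
      ((NormedSpace.exp (Complex.I • ((Real.pi / 2 : ℝ) : ℂ) •
          (lap n).map (fun x => (x : ℂ)))) ⟨0, by omega⟩ ⟨1, by omega⟩) = 1 := by
  obtain ⟨m, hm⟩ := hdvd
  have hn4 : 4 ≤ n := by omega
  set w : Fin n → ℂ := fun i => (if (i : ℕ) = 0 then 1 else 0) - (if (i : ℕ) = 1 then 1 else 0)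
    with hw
  set J : Matrix (Fin n) (Fin n) ℂ := Matrix.of (fun _ _ => (1 : ℂ)) with hJ
  set V : Matrix (Fin n) (Fin n) ℂ := Matrix.vecMulVec w w with hV
  set c : ℂ := Complex.I * ((Real.pi / 2 : ℝ) : ℂ) with hc
  -- sum facts
  have key : ∀ (j : ℕ) (hj : j < n), (∑ k : Fin n, (if (k : ℕ) = j then (1 : ℂ) else 0)) = 1 := by
    intro j hj
    rw [Finset.sum_eq_single (⟨j, hj⟩ : Fin n)]
    · simp
    · intro b _ hb
      simp only [ne_eq, Fin.ext_iff] at hb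
      simp [hb]
    · simp
  have hsumw : ∑ k : Fin n, w k = 0 := by
    simp only [hw, Finset.sum_sub_distrib]
    rw [key 0 (by omega), key 1 (by omega)]
    ring
  have hsumw2 : ∑ k : Fin n, w k * w k = 2 := by
    have h2 : ∀ k : Fin n, w k * w k =
        (if (k : ℕ) = 0 then 1 else 0) + (if (k : ℕ) = 1 then 1 else 0) := by
      intro k
      by_cases h1 : (k : ℕ) = 0 <;> by_cases h2 : (k : ℕ) = 1 <;>
        simp [hw, h1, h2]
    rw [Finset.sum_congr rfl fun k _ => h2 k, Finset.sum_add_distrib,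
      key 0 (by omega), key 1 (by omega)]
    ring
  -- multiplication facts
  have hJJ : J * J = (n : ℂ) • J := by
    ext i j
    simp [hJ, Matrix.mul_apply]
  have hJV : J * V = 0 := by
    ext i j
    simp only [hJ, hV, Matrix.mul_apply, Matrix.of_apply, vecMulVec_apply, one_mul,
      Matrix.zero_apply]
    rw [← Finset.sum_mul, hsumw, zero_mul]
  have hVJ : V * J = 0 := by
    ext i j
    simp only [hJ, hV, Matrix.mul_apply, Matrix.of_apply, vecMulVec_apply, mul_one,
      Matrix.zero_apply]
    rw [← Finset.mul_sum, hsumw, mul_zero]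
  have hVV : V * V = (2 : ℂ) • V := by
    ext i j
    simp only [hV, Matrix.mul_apply, vecMulVec_apply, Matrix.smul_apply, smul_eq_mul]
    have h3 : ∀ k : Fin n, (w i * w k) * (w k * w j) = (w i * w j) * (w k * w k) :=
      fun k => by ring
    rw [Finset.sum_congr rfl fun k _ => h3 k, ← Finset.mul_sum, hsumw2]
    ring
  -- decomposition of the Laplacian
  have hLc : (lap n).map (fun x => (x : ℂ)) = (n : ℂ) • 1 - J - V := by
    ext i j
    simp only [lap, eVec, Matrix.map_apply, Matrix.sub_apply, Matrix.smul_apply,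
      Matrix.one_apply, Matrix.of_apply, vecMulVec_apply, hJ, hV, hw, smul_eq_mul]
    push_cast [apply_ite (fun x : ℝ => (x : ℂ))]
    ring
  have hsplit : Complex.I • ((Real.pi / 2 : ℝ) : ℂ) • (lap n).map (fun x => (x : ℂ))
      = (c * n) • (1 : Matrix (Fin n) (Fin n) ℂ) + ((-c) • J + (-c) • V) := by
    rw [smul_smul, ← hc, hLc]
    rw [smul_sub, smul_sub, smul_smul]
    simp only [neg_smul]
    abel
  -- norm instances
  letI : SeminormedRing (Matrix (Fin n) (Fin n) ℂ) := Matrix.linftyOpSemiNormedRing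
  letI : NormedRing (Matrix (Fin n) (Fin n) ℂ) := Matrix.linftyOpNormedRing
  letI : NormedAlgebra ℂ (Matrix (Fin n) (Fin n) ℂ) := Matrix.linftyOpNormedAlgebra
  have hcommJV : Commute ((-c) • J) ((-c) • V) := by
    refine (Commute.smul_left ?_ _).smul_right _
    show J * V = V * J
    rw [hJV, hVJ]
  have hcomm1 : Commute ((c * n) • (1 : Matrix (Fin n) (Fin n) ℂ)) ((-c) • J + (-c) • V) :=
    (Commute.one_left _).smul_left _
  -- exp values
  have hmC : (n : ℂ) = 4 * (m : ℂ) := by exact_mod_cast congrArg (fun k : ℕ => (k : ℂ)) hm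
  have hexp1 : Complex.exp (c * n) = 1 := by
    rw [show c * (n : ℂ) = (m : ℤ) * (2 * (Real.pi : ℂ) * Complex.I) by
      rw [hc, hmC]; push_cast; ring]
    exact Complex.exp_int_mul_two_pi_mul_I m
  have hexp2 : Complex.exp (-(c * n)) = 1 := by
    rw [show -(c * (n : ℂ)) = (-(m : ℤ)) * (2 * (Real.pi : ℂ) * Complex.I) by
      rw [hc, hmC]; push_cast; ring]
    exact_mod_cast Complex.exp_int_mul_two_pi_mul_I (-(m : ℤ))
  have hexp3 : Complex.exp (-(2 * c)) = -1 := by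
    rw [Complex.exp_neg, show (2 : ℂ) * c = (Real.pi : ℂ) * Complex.I by rw [hc]; push_cast; ring,
      Complex.exp_pi_mul_I]
    norm_num
  have hnne : (n : ℂ) ≠ 0 := by exact_mod_cast hn.ne'
  have e1 : NormedSpace.exp ((c * n) • (1 : Matrix (Fin n) (Fin n) ℂ)) = 1 := by
    refine (exp_idem (1 : Matrix (Fin n) (Fin n) ℂ) (one_mul 1) (c * n)).trans ?_
    rw [hexp1]
    simp
  have e2 : NormedSpace.exp ((-c) • J) = 1 := by
    have h1 : (-c) • J = (-(c * n)) • ((n : ℂ)⁻¹ • J) := by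
      rw [smul_smul]
      congr 1
      field_simp
    have hidem : ((n : ℂ)⁻¹ • J) * ((n : ℂ)⁻¹ • J) = (n : ℂ)⁻¹ • J := by
      rw [Matrix.smul_mul, Matrix.mul_smul, hJJ, smul_smul, smul_smul]
      congr 1
      field_simp
    rw [h1]
    refine (exp_idem _ hidem _).trans ?_
    rw [hexp2]
    simp
  have e3 : NormedSpace.exp ((-c) • V) = 1 - V := by
    have h1 : (-c) • V = (-(2 * c)) • ((2 : ℂ)⁻¹ • V) := by
      rw [smul_smul]
      congr 1
      ring
    have hidem : ((2 : ℂ)⁻¹ • V) * ((2 : ℂ)⁻¹ • V) = (2 : ℂ)⁻¹ • V := by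
      rw [Matrix.smul_mul, Matrix.mul_smul, hVV, smul_smul, smul_smul]
      congr 1
      norm_num
    rw [h1]
    refine (exp_idem _ hidem _).trans ?_
    rw [hexp3, smul_smul]
    norm_num
    rw [sub_eq_add_neg]
  rw [hsplit, Matrix.exp_add_of_commute _ _ hcomm1, Matrix.exp_add_of_commute _ _ hcommJV,
    e1, e2, e3, one_mul, one_mul]
  simp only [Matrix.sub_apply, Matrix.one_apply, hV, vecMulVec_apply, hw]
  norm_num [Fin.ext_iff]
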